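/- For every N ≥ 1 and every subset S₀ ⊆ {1,…,N}, there exists a unique descendible 2N-periodic function h : ℕ → ℤ/2ℤ such that {x ∈ {1,…,N} : h(x) = 1} = S₀. In other words, descendible 2N-periodic functions ℕ → ℤ/2ℤ are in bijection with subsets of {1,…,N}. -/

import Mathlib

open Polynomial

/-- `h : ℕ → ℤ/2ℤ` is `2N`-periodic (on positive integers). -/
def IsPeriodicTwoN (N : ℕ) (h : ℕ → ZMod 2) : Prop :=
  ∀ x, 1 ≤ x → h (x + 2 * N) = h x

/-- The set `T` associated to a `2N`-periodic function `h`: even `x ∈ [1,2N]` such that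
`#{k : 1 ≤ k ≤ v₂(x), h(x/2^k) = 1}` is odd. -/
def Tset (N : ℕ) (h : ℕ → ZMod 2) : Set ℕ :=
  {x | 1 ≤ x ∧ x ≤ 2 * N ∧ Even x ∧
    Odd (((Finset.Icc 1 (padicValNat 2 x)).filter (fun k => h (x / 2 ^ k) = 1)).card)}

/-- `h` is a descendible `2N`-periodic function. -/
def IsDescendible (N : ℕ) (h : ℕ → ZMod 2) : Prop :=
  IsPeriodicTwoN N h ∧
  ∀ x, 1 ≤ x → x ≤ N →
    ((2 * x ∈ Tset N h ∧ N + x ∈ Tset N h) → ¬ h (N + x) = 1) ∧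
    ((2 * x ∈ Tset N h ∧ N + x ∉ Tset N h) → h (N + x) = 1) ∧
    ((2 * x ∉ Tset N h ∧ N + x ∈ Tset N h) → h (N + x) = 1) ∧
    ((2 * x ∉ Tset N h ∧ N + x ∉ Tset N h) → ¬ h (N + x) = 1)

/-- `ĥ(m) = Σ_{k=1}^{v₂(m)} h(m/2^k)`. -/
def hhat (h : ℕ → ZMod 2) (m : ℕ) : ZMod 2 :=
  ∑ k ∈ Finset.Icc 1 (padicValNat 2 m), h (m / 2 ^ k)

/-- `h` is an essentially descendible `2N`-periodic function. -/
def IsEssDescendible (N : ℕ) (h : ℕ → ZMod 2) : Prop :=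
  ∃ g : ℕ → ZMod 2, IsDescendible N g ∧
    (∀ i, 2 * N + 1 ≤ i → h i = g i) ∧
    ∀ m, 1 ≤ m →
      (∑ k ∈ (Finset.range (2 * N + 1)).filter (fun k => 2 ^ k * m ≤ 2 * N), h (2 ^ k * m))
        = ∑ k ∈ (Finset.range (2 * N + 1)).filter (fun k => 2 ^ k * m ≤ 2 * N), g (2 ^ k * m)

/-- Key lemma: `Tset N h` depends only on the values of `h` on `[1, N]`. -/
lemma Tset_congr (N : ℕ) (h h' : ℕ → ZMod 2)
    (hag : ∀ y, 1 ≤ y → y ≤ N → h y = h' y) : Tset N h = Tset N h' := by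
  ext x
  unfold Tset
  simp only [Set.mem_setOf_eq]
  have key : 1 ≤ x → x ≤ 2 * N →
      ((Finset.Icc 1 (padicValNat 2 x)).filter (fun k => h (x / 2 ^ k) = 1)) =
      ((Finset.Icc 1 (padicValNat 2 x)).filter (fun k => h' (x / 2 ^ k) = 1)) := by
    intro h1 h2
    apply Finset.filter_congr
    intro k hk
    simp only [Finset.mem_Icc] at hk
    have hdvd : 2 ^ k ∣ x := dvd_trans (pow_dvd_pow 2 hk.2) pow_padicValNat_dvd
    have hle : 2 ^ k ≤ x := Nat.le_of_dvd h1 hdvd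
    have h1' : 1 ≤ x / 2 ^ k := (Nat.one_le_div_iff (pow_pos (by norm_num : (0:ℕ) < 2) k)).mpr hle
    have h2' : x / 2 ^ k ≤ N := by
      calc x / 2 ^ k ≤ x / 2 := Nat.div_le_div_left (by
            calc (2:ℕ) = 2 ^ 1 := by norm_num
            _ ≤ 2 ^ k := Nat.pow_le_pow_right (by norm_num) hk.1) (by norm_num)
        _ ≤ 2 * N / 2 := Nat.div_le_div_right h2
        _ = N := by omega
    rw [hag _ h1' h2']
  constructor <;> rintro ⟨h1, h2, h3, h4⟩ <;> refine ⟨h1, h2, h3, ?_⟩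
  · rwa [← key h1 h2]
  · rwa [key h1 h2]

/-- The indicator function of `S₀`. -/
noncomputable def baseFun (S₀ : Finset ℕ) : ℕ → ZMod 2 := fun x => if x ∈ S₀ then 1 else 0

open Classical in
/-- The canonical descendible extension of the indicator function of `S₀`. -/
noncomputable def buildFun (N : ℕ) (S₀ : Finset ℕ) : ℕ → ZMod 2 := fun x =>
  if x = 0 then 0 else
    if (x - 1) % (2 * N) + 1 ≤ N then baseFun S₀ ((x - 1) % (2 * N) + 1)
    else if (2 * ((x - 1) % (2 * N) + 1 - N) ∈ Tset N (baseFun S₀) ↔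
            (x - 1) % (2 * N) + 1 ∈ Tset N (baseFun S₀)) then 0 else 1

lemma buildFun_low (N : ℕ) (S₀ : Finset ℕ) (x : ℕ) (h1 : 1 ≤ x) (h2 : x ≤ N) :
    buildFun N S₀ x = baseFun S₀ x := by
  have hN : 1 ≤ N := le_trans h1 h2
  have hr : (x - 1) % (2 * N) + 1 = x := by
    rw [Nat.mod_eq_of_lt (by omega)]; omega
  unfold buildFun
  rw [if_neg (show ¬ (x = 0) by omega), hr, if_pos h2]

open Classical in
lemma buildFun_high (N : ℕ) (S₀ : Finset ℕ) (y : ℕ) (h1 : 1 ≤ y) (h2 : y ≤ N) :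
    buildFun N S₀ (N + y) =
      if (2 * y ∈ Tset N (baseFun S₀) ↔ N + y ∈ Tset N (baseFun S₀)) then 0 else 1 := by
  have hr : (N + y - 1) % (2 * N) + 1 = N + y := by
    rw [Nat.mod_eq_of_lt (by omega)]; omega
  unfold buildFun
  rw [if_neg (show ¬ (N + y = 0) by omega), hr, if_neg (show ¬ (N + y ≤ N) by omega),
    show N + y - N = y by omega]

lemma buildFun_periodic (N : ℕ) (hN : 1 ≤ N) (S₀ : Finset ℕ) :
    IsPeriodicTwoN N (buildFun N S₀) := by
  intro x hx
  unfold buildFun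
  have h1 : ¬ (x + 2 * N = 0) := by omega
  have h2 : ¬ (x = 0) := by omega
  have h3 : (x + 2 * N - 1) % (2 * N) = (x - 1) % (2 * N) := by
    have : x + 2 * N - 1 = (x - 1) + 2 * N := by omega
    rw [this, Nat.add_mod_right]
  rw [if_neg h1, if_neg h2, h3]

theorem descendible_bijection_with_subsets (N : ℕ) (hN : 1 ≤ N)
    (S₀ : Finset ℕ) (hS₀ : S₀ ⊆ Finset.Icc 1 N) :
    ∃ h : ℕ → ZMod 2,
      (IsDescendible N h ∧ ∀ x ∈ Finset.Icc 1 N, (h x = 1 ↔ x ∈ S₀)) ∧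
      ∀ h' : ℕ → ZMod 2,
        (IsDescendible N h' ∧ ∀ x ∈ Finset.Icc 1 N, (h' x = 1 ↔ x ∈ S₀)) →
        ∀ x, 1 ≤ x → h' x = h x := by
  classical
  set b := baseFun S₀ with hb
  set h := buildFun N S₀ with hh
  set T0 := Tset N b with hT0
  have hzmod : ∀ a : ZMod 2, a = 0 ∨ a = 1 := by decide
  have hagree : ∀ y, 1 ≤ y → y ≤ N → h y = b y := fun y h1 h2 => buildFun_low N S₀ y h1 h2
  have hTeq : Tset N h = T0 := Tset_congr N h b hagree
  have hval : ∀ y, 1 ≤ y → y ≤ N →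
      h (N + y) = if (2 * y ∈ T0 ↔ N + y ∈ T0) then 0 else 1 :=
    fun y h1 h2 => buildFun_high N S₀ y h1 h2
  have hdesc : IsDescendible N h := by
    refine ⟨buildFun_periodic N hN S₀, ?_⟩
    intro x h1 h2
    rw [hTeq, hval x h1 h2]
    refine ⟨?_, ?_, ?_, ?_⟩ <;> rintro ⟨ha, hb'⟩
    · rw [if_pos (by tauto)]; decide
    · rw [if_neg (by tauto)]
    · rw [if_neg (by tauto)]
    · rw [if_pos (by tauto)]; decide
  have hiff : ∀ x ∈ Finset.Icc 1 N, (h x = 1 ↔ x ∈ S₀) := by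
    intro x hx
    simp only [Finset.mem_Icc] at hx
    rw [hagree x hx.1 hx.2, hb]
    unfold baseFun
    split
    · simpa
    · simp_all
  refine ⟨h, ⟨hdesc, hiff⟩, ?_⟩
  rintro h' ⟨⟨hper', hdesc'⟩, hiff'⟩
  -- h' agrees with b on [1, N]
  have hag' : ∀ y, 1 ≤ y → y ≤ N → h' y = b y := by
    intro y h1 h2
    have := hiff' y (Finset.mem_Icc.mpr ⟨h1, h2⟩)
    rw [hb]; unfold baseFun
    split
    · exact this.mpr ‹_›
    · rcases hzmod (h' y) with h0 | h0
      · exact h0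
      · exact absurd (this.mp h0) ‹_›
  have hTeq' : Tset N h' = T0 := Tset_congr N h' b hag'
  -- agreement on [1, 2N]
  have hmain : ∀ x, 1 ≤ x → x ≤ 2 * N → h' x = h x := by
    intro x h1 h2
    by_cases hle : x ≤ N
    · rw [hag' x h1 hle, hagree x h1 hle]
    · obtain ⟨y, hy1, hy2, rfl⟩ : ∃ y, 1 ≤ y ∧ y ≤ N ∧ x = N + y :=
        ⟨x - N, by omega, by omega, by omega⟩
      obtain ⟨c1, c2, c3, c4⟩ := hdesc' y hy1 hy2
      rw [hTeq'] at c1 c2 c3 c4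
      rw [hval y hy1 hy2]
      by_cases ht1 : 2 * y ∈ T0 <;> by_cases ht2 : N + y ∈ T0
      · rw [if_pos (by tauto)]
        rcases hzmod (h' (N + y)) with h0 | h0
        · exact h0
        · exact absurd h0 (c1 ⟨ht1, ht2⟩)
      · rw [if_neg (by tauto)]; exact c2 ⟨ht1, ht2⟩
      · rw [if_neg (by tauto)]; exact c3 ⟨ht1, ht2⟩
      · rw [if_pos (by tauto)]
        rcases hzmod (h' (N + y)) with h0 | h0
        · exact h0
        · exact absurd h0 (c4 ⟨ht1, ht2⟩)
  -- induction for the rest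
  intro x
  induction x using Nat.strong_induction_on with
  | _ x ih =>
    intro h1
    by_cases h2 : x ≤ 2 * N
    · exact hmain x h1 h2
    · have hx : x = (x - 2 * N) + 2 * N := by omega
      have h1' : 1 ≤ x - 2 * N := by omega
      calc h' x = h' ((x - 2 * N) + 2 * N) := by rw [← hx]
        _ = h' (x - 2 * N) := hper' _ h1'
        _ = h (x - 2 * N) := ih _ (by omega) h1'
        _ = h ((x - 2 * N) + 2 * N) := (buildFun_periodic N hN S₀ _ h1').symm
        _ = h x := by rw [← hx]
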